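/- arXiv:1906.06032 — 2 statements merged into one kernel-verified Lean document; each statement's English description precedes it below -/
import Mathlib

section
/- Let f*(x) = E[Y | X = x] be the minimizer of the standard population squared loss, and suppose f* is invariant on perturbation sets: f*(x̃) = f*(x) for all x̃ ∈ B(x), where x ∈ B(x) for all x. Then for any measurable f, E[sup_{x̃ ∈ B(x)}(f(x̃) - y)²] ≥ E[sup_{x̃ ∈ B(x)}(f*(x̃) - y)²]; i.e., f* also minimizes the robust population squared loss. -/
open MeasureTheory

lemma aux_integrable_mul {Ω : Type*} {mΩ : MeasurableSpace Ω} {μ : Measure Ω}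
    {p q : Ω → ℝ} (hp : MemLp p 2 μ) (hq : MemLp q 2 μ) :
    Integrable (fun ω => p ω * q ω) μ := by
  have h := L2.integrable_inner (𝕜 := ℝ) (hp.toLp p) (hq.toLp q)
  refine h.congr ?_
  filter_upwards [hp.coeFn_toLp, hq.coeFn_toLp] with ω h1 h2
  simp [h1, h2, RCLike.inner_apply, mul_comm]

/-- The conditional expectation of an L2 function is in L2. -/
lemma aux_memℒp_condexp' {Ω' : Type*} {m m0 : MeasurableSpace Ω'} {μ : Measure Ω'}
    (hm : m ≤ m0) [IsFiniteMeasure μ] {Y : Ω' → ℝ} (hY : MemLp Y 2 μ) :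
    MemLp (μ[Y|m]) 2 μ := by
  haveI : SigmaFinite (μ.trim hm) := by
    have : IsFiniteMeasure (μ.trim hm) := isFiniteMeasure_trim hm
    infer_instance
  set Y2 : Lp ℝ 2 μ := hY.toLp Y with hY2
  set g2 := (condExpL2 ℝ ℝ hm Y2 : lpMeas ℝ ℝ m 2 μ)
  have hg2Y : (g2 : Ω' → ℝ) =ᵐ[μ] μ[Y|m] := by
    refine ae_eq_condExp_of_forall_setIntegral_eq hm (hY.integrable one_le_two)
      (fun s _ hμs => integrableOn_Lp_of_measure_ne_top _ fact_one_le_two_ennreal.elim hμs.ne) ?_ ?_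
    · intro s hs hμs
      rw [integral_condExpL2_eq hm Y2 hs hμs.ne]
      exact setIntegral_congr_ae (hm s hs) ((hY.coeFn_toLp).mono fun x hx _ => hx)
    · exact lpMeas.aestronglyMeasurable _
  exact (Lp.memLp (g2 : Lp ℝ 2 μ)).ae_eq hg2Y

/-- Theorem 1 (regression): if the Bayes regression function `fstar` is invariant on the
perturbation sets `B x`, it also minimizes the robust population squared loss. -/
theorem stmt_3 {Ω 𝒳 : Type*} [MeasurableSpace Ω] [MeasurableSpace 𝒳]
    (μ : Measure Ω) [IsProbabilityMeasure μ]
    (X : Ω → 𝒳) (hX : Measurable X)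
    (Y : Ω → ℝ) (hY : MemLp Y 2 μ)
    (B : 𝒳 → Set 𝒳) (hB : ∀ x, x ∈ B x)
    (fstar : 𝒳 → ℝ) (hfstar_meas : Measurable fstar)
    (hfstar : (fun ω => fstar (X ω)) =ᵐ[μ] μ[Y | MeasurableSpace.comap X inferInstance])
    (hinv : ∀ x, ∀ z ∈ B x, fstar z = fstar x)
    (f : 𝒳 → ℝ) (hf : Measurable f) (hfX : MemLp (fun ω => f (X ω)) 2 μ)
    (hBdd : ∀ (x : 𝒳) (y : ℝ), BddAbove ((fun z => (f z - y) ^ 2) '' B x))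
    (hInt : Integrable (fun ω => ⨆ z ∈ B (X ω), (f z - Y ω) ^ 2) μ) :
    ∫ ω, ⨆ z ∈ B (X ω), (fstar z - Y ω) ^ 2 ∂μ
      ≤ ∫ ω, ⨆ z ∈ B (X ω), (f z - Y ω) ^ 2 ∂μ := by
  have hm := hX.comap_le
  set m : MeasurableSpace Ω := MeasurableSpace.comap X inferInstance with hm_def
  haveI : SigmaFinite (μ.trim hm) := by
    have : IsFiniteMeasure (μ.trim hm) := isFiniteMeasure_trim hm
    infer_instance
  -- Step A: the robust loss of fstar is the standard loss, pointwise.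
  have stepA : ∀ ω, (⨆ z ∈ B (X ω), (fstar z - Y ω) ^ 2) = (fstar (X ω) - Y ω) ^ 2 := by
    intro ω
    set x := X ω; set y := Y ω
    have hc : (0 : ℝ) ≤ (fstar x - y) ^ 2 := sq_nonneg _
    apply le_antisymm
    · refine Real.iSup_le (fun z => Real.iSup_le (fun hz => ?_) hc) hc
      rw [hinv x z hz]
    · have bdd : BddAbove (Set.range fun z => ⨆ _ : z ∈ B x, (fstar z - y) ^ 2) := by
        refine ⟨(fstar x - y) ^ 2, ?_⟩
        rintro _ ⟨z, rfl⟩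
        exact Real.iSup_le (fun hz => by rw [hinv x z hz]) hc
      calc (fstar x - y) ^ 2 = ⨆ _ : x ∈ B x, (fstar x - y) ^ 2 := (ciSup_pos (p := x ∈ B x) (f := fun _ => _) (hB x)).symm
        _ ≤ ⨆ z, ⨆ _ : z ∈ B x, (fstar z - y) ^ 2 := le_ciSup bdd x
  -- Step B: the robust loss of f dominates its standard loss, pointwise.
  have stepB : ∀ ω, (f (X ω) - Y ω) ^ 2 ≤ ⨆ z ∈ B (X ω), (f z - Y ω) ^ 2 := by
    intro ω
    set x := X ω; set y := Y ω
    obtain ⟨C, hC⟩ := hBdd x y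
    have hxC : (f x - y) ^ 2 ≤ C := hC ⟨x, hB x, rfl⟩
    have h0C : (0 : ℝ) ≤ C := le_trans (sq_nonneg _) hxC
    have bdd : BddAbove (Set.range fun z => ⨆ _ : z ∈ B x, (f z - y) ^ 2) := by
      refine ⟨C, ?_⟩
      rintro _ ⟨z, rfl⟩
      exact Real.iSup_le (fun hz => hC ⟨z, hz, rfl⟩) h0C
    calc (f x - y) ^ 2 = ⨆ _ : x ∈ B x, (f x - y) ^ 2 := (ciSup_pos (p := x ∈ B x) (f := fun _ => _) (hB x)).symm
      _ ≤ ⨆ z, ⨆ _ : z ∈ B x, (f z - y) ^ 2 := le_ciSup bdd x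
  -- Notation
  set g : Ω → ℝ := fun ω => fstar (X ω) with hg_def
  have hg2 : MemLp g 2 μ := (aux_memℒp_condexp' hm hY).ae_eq hfstar.symm
  set h : Ω → ℝ := fun ω => f (X ω) - g ω with hh_def
  have hh2 : MemLp h 2 μ := hfX.sub hg2
  have hhm : StronglyMeasurable[m] h := by
    have hXm : Measurable[m] X := fun s hs => ⟨s, hs, rfl⟩
    exact ((hf.comp hXm).sub (hfstar_meas.comp hXm)).stronglyMeasurable
  have hYint : Integrable Y μ := hY.integrable one_le_two
  -- cross term is zero
  have cross : ∫ ω, h ω * (g ω - Y ω) ∂μ = 0 := by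
    have hmulint : Integrable (fun ω => h ω * Y ω) μ := aux_integrable_mul hh2 hY
    have hmulint' : Integrable (h * Y) μ := hmulint
    have hpull : μ[h * Y|m] =ᵐ[μ] h * μ[Y|m] :=
      condExp_mul_of_stronglyMeasurable_left hhm hmulint' hYint
    have h1 : ∫ ω, h ω * Y ω ∂μ = ∫ ω, h ω * g ω ∂μ := by
      rw [show ∫ ω, h ω * Y ω ∂μ = ∫ ω, (h * Y) ω ∂μ from rfl,
        ← integral_condExp hm (f := h * Y)]
      refine integral_congr_ae (hpull.trans ?_)
      filter_upwards [hfstar] with ω hω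
      simp only [Pi.mul_apply]
      rw [← hω]
    have hintg : Integrable (fun ω => h ω * g ω) μ := aux_integrable_mul hh2 hg2
    have : ∫ ω, h ω * (g ω - Y ω) ∂μ
        = ∫ ω, h ω * g ω ∂μ - ∫ ω, h ω * Y ω ∂μ := by
      rw [← integral_sub hintg hmulint]
      congr 1; funext ω; ring
    rw [this, h1, sub_self]
  -- Step C: Bayes optimality for the standard loss
  have hh_sq : Integrable (fun ω => h ω ^ 2) μ := hh2.integrable_sq
  have hgY_sq : Integrable (fun ω => (g ω - Y ω) ^ 2) μ := (hg2.sub hY).integrable_sq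
  have hcross_int : Integrable (fun ω => h ω * (g ω - Y ω)) μ :=
    aux_integrable_mul hh2 (hg2.sub hY)
  have stepC : ∫ ω, (g ω - Y ω) ^ 2 ∂μ ≤ ∫ ω, (f (X ω) - Y ω) ^ 2 ∂μ := by
    have hexp : (fun ω => (f (X ω) - Y ω) ^ 2)
        = fun ω => (h ω ^ 2 + 2 * (h ω * (g ω - Y ω))) + (g ω - Y ω) ^ 2 := by
      funext ω; simp only [hh_def]; ring
    have hcross2 : Integrable (fun ω => 2 * (h ω * (g ω - Y ω))) μ := hcross_int.const_mul 2
    have hsum : Integrable (fun ω => h ω ^ 2 + 2 * (h ω * (g ω - Y ω))) μ := hh_sq.add hcross2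
    rw [hexp, integral_add hsum hgY_sq, integral_add hh_sq hcross2, integral_const_mul, cross]
    have : 0 ≤ ∫ ω, h ω ^ 2 ∂μ := integral_nonneg fun ω => sq_nonneg _
    linarith
  -- Assemble
  have hLHS : (fun ω => ⨆ z ∈ B (X ω), (fstar z - Y ω) ^ 2)
      = fun ω => (g ω - Y ω) ^ 2 := funext stepA
  rw [hLHS]
  refine le_trans stepC ?_
  exact integral_mono ((hfX.sub hY).integrable_sq) hInt stepB
end

section
/- In the staircase setting with Y = m⌊X⌉ + σV, V ~ N(0,1) independent of X, the staircase predictor f*(x) = m⌊x⌉ achieves both standard population squared loss and robust population squared loss equal to σ², and this is the minimum possible value of each over all measurable predictors. -/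
open MeasureTheory ProbabilityTheory

open scoped NNReal ENNReal
open Real

lemma aux_pdf_eq (x : ℝ) : gaussianPDFReal 0 1 x
    = (Real.sqrt (2 * Real.pi))⁻¹ * Real.exp (-(1/2) * x ^ 2) := by
  simp only [gaussianPDFReal, NNReal.coe_one, mul_one, sub_zero]
  congr 1
  ring

lemma aux_I0 : ∫ x : ℝ, Real.exp (-(1/2) * x ^ 2) = Real.sqrt (2 * Real.pi) := by
  rw [integral_gaussian, show Real.pi / (1/2 : ℝ) = 2 * Real.pi by ring]

lemma aux_int_sq : Integrable (fun x : ℝ => x ^ 2 * Real.exp (-(1/2) * x ^ 2)) := by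
  have h := integrable_rpow_mul_exp_neg_mul_sq (b := 1/2) (by norm_num) (s := 2) (by norm_num)
  refine h.congr ?_
  filter_upwards with x
  rw [show ((2:ℝ)) = ((2:ℕ):ℝ) by norm_num, Real.rpow_natCast]

lemma aux_I1 : ∫ x : ℝ, x * Real.exp (-(1/2) * x ^ 2) = 0 := by
  set f : ℝ → ℝ := fun x => x * Real.exp (-(1/2) * x ^ 2) with hf
  have h : ∫ x : ℝ, f (-x) = ∫ x : ℝ, f x :=
    (Measure.measurePreserving_neg (volume : Measure ℝ)).integral_comp
      (Homeomorph.neg ℝ).measurableEmbedding f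
  have h2 : ∀ x : ℝ, f (-x) = - f x := by
    intro x; simp only [hf]; rw [neg_sq]; ring
  simp_rw [h2, integral_neg] at h
  linarith

lemma aux_I2 : ∫ x : ℝ, x ^ 2 * Real.exp (-(1/2) * x ^ 2) = Real.sqrt (2 * Real.pi) := by
  have h2 := integral_comp_abs (f := fun x : ℝ => x ^ 2 * Real.exp (-(1/2) * x ^ 2))
  simp only [sq_abs] at h2
  rw [h2]
  have h3 : ∫ x in Set.Ioi (0:ℝ), x ^ 2 * Real.exp (-(1/2) * x ^ 2)
      = ∫ x in Set.Ioi (0:ℝ), x ^ (2:ℝ) * Real.exp (-(1/2) * x ^ (2:ℝ)) := by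
    refine setIntegral_congr_fun measurableSet_Ioi (fun x _ => ?_)
    rw [show ((2:ℝ)) = ((2:ℕ):ℝ) by norm_num, Real.rpow_natCast]
  rw [h3, integral_rpow_mul_exp_neg_mul_rpow (by norm_num) (by norm_num) (by norm_num)]
  have hG : Real.Gamma ((2 + 1) / 2) = Real.sqrt Real.pi / 2 := by
    rw [show ((2:ℝ) + 1) / 2 = 1/2 + 1 by norm_num,
      Real.Gamma_add_one (by norm_num), Real.Gamma_one_half_eq]
    ring
  have hpow : ((1:ℝ)/2) ^ (-((2:ℝ) + 1) / 2) = 2 * Real.sqrt 2 := by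
    rw [show (-((2:ℝ) + 1) / 2) = -(3/2) by norm_num, one_div,
      Real.inv_rpow (by norm_num), Real.rpow_neg (by norm_num), inv_inv,
      show ((3:ℝ)/2) = 1 + 1/2 by norm_num, Real.rpow_add (by norm_num),
      Real.rpow_one, ← Real.sqrt_eq_rpow]
  rw [hpow, hG, Real.sqrt_mul (by norm_num)]
  ring

lemma aux_gauss_integral (g : ℝ → ℝ) :
    ∫ x, g x ∂(gaussianReal 0 1) = ∫ x, gaussianPDFReal 0 1 x * g x := by
  rw [gaussianReal_of_var_ne_zero 0 one_ne_zero]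
  have h : gaussianPDF 0 1 = fun x => ((Real.toNNReal (gaussianPDFReal 0 1 x) : ℝ≥0) : ℝ≥0∞) := rfl
  rw [h, integral_withDensity_eq_integral_smul (measurable_gaussianPDFReal 0 1).real_toNNReal g]
  congr 1
  funext x
  rw [NNReal.smul_def, Real.coe_toNNReal _ (gaussianPDFReal_nonneg 0 1 x), smul_eq_mul]

lemma aux_gauss_integrable (g : ℝ → ℝ)
    (h : Integrable (fun x => gaussianPDFReal 0 1 x * g x)) :
    Integrable g (gaussianReal 0 1) := by
  rw [gaussianReal_of_var_ne_zero 0 one_ne_zero]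
  have heq : gaussianPDF 0 1 = fun x => ((Real.toNNReal (gaussianPDFReal 0 1 x) : ℝ≥0) : ℝ≥0∞) := rfl
  rw [heq, integrable_withDensity_iff_integrable_smul (measurable_gaussianPDFReal 0 1).real_toNNReal]
  refine h.congr ?_
  filter_upwards with x
  rw [NNReal.smul_def, Real.coe_toNNReal _ (gaussianPDFReal_nonneg 0 1 x), smul_eq_mul]

lemma aux_gauss_id : Integrable (fun x : ℝ => x) (gaussianReal 0 1)
    ∧ ∫ x, x ∂(gaussianReal 0 1) = 0 := by
  constructor
  · refine aux_gauss_integrable _ ?_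
    have := (integrable_mul_exp_neg_mul_sq (b := 1/2) (by norm_num)).const_mul
      ((Real.sqrt (2 * Real.pi))⁻¹)
    refine this.congr ?_
    filter_upwards with x
    rw [aux_pdf_eq]; ring
  · rw [aux_gauss_integral]
    simp_rw [aux_pdf_eq]
    have : ∀ x : ℝ, (Real.sqrt (2 * Real.pi))⁻¹ * Real.exp (-(1/2) * x ^ 2) * x
        = (Real.sqrt (2 * Real.pi))⁻¹ * (x * Real.exp (-(1/2) * x ^ 2)) := fun x => by ring
    simp_rw [this, integral_const_mul, aux_I1, mul_zero]

lemma aux_gauss_sq : Integrable (fun x : ℝ => x ^ 2) (gaussianReal 0 1)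
    ∧ ∫ x, x ^ 2 ∂(gaussianReal 0 1) = 1 := by
  have hπ : Real.sqrt (2 * Real.pi) ≠ 0 := by
    positivity
  constructor
  · refine aux_gauss_integrable _ ?_
    have := aux_int_sq.const_mul ((Real.sqrt (2 * Real.pi))⁻¹)
    refine this.congr ?_
    filter_upwards with x
    rw [aux_pdf_eq]; ring
  · rw [aux_gauss_integral]
    simp_rw [aux_pdf_eq]
    have : ∀ x : ℝ, (Real.sqrt (2 * Real.pi))⁻¹ * Real.exp (-(1/2) * x ^ 2) * x ^ 2
        = (Real.sqrt (2 * Real.pi))⁻¹ * (x ^ 2 * Real.exp (-(1/2) * x ^ 2)) := fun x => by ring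
    simp_rw [this, integral_const_mul, aux_I2, inv_mul_cancel₀ hπ]

lemma aux_biSup_le {s : Set ℝ} {F : ℝ → ℝ} {c : ℝ} (hc : 0 ≤ c) (h : ∀ z ∈ s, F z ≤ c) :
    (⨆ z ∈ s, F z) ≤ c :=
  Real.iSup_le (fun z => Real.iSup_le (fun hz => h z hz) hc) hc

lemma aux_le_biSup {s : Set ℝ} {F : ℝ → ℝ} (hbdd : BddAbove (F '' s)) {a : ℝ} (ha : a ∈ s) :
    F a ≤ ⨆ z ∈ s, F z := by
  obtain ⟨M, hM⟩ := hbdd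
  have hb : ∀ z : ℝ, (⨆ _ : z ∈ s, F z) ≤ max M 0 := fun z =>
    Real.iSup_le (fun hz => le_max_of_le_left (hM ⟨z, hz, rfl⟩)) (le_max_right _ _)
  have hbdd2 : BddAbove (Set.range fun z => ⨆ _ : z ∈ s, F z) := by
    refine ⟨max M 0, ?_⟩
    rintro _ ⟨z, rfl⟩
    exact hb z
  calc F a = ⨆ _ : a ∈ s, F a := (ciSup_pos (f := fun _ => F a) ha).symm
    _ ≤ ⨆ z ∈ s, F z := le_ciSup hbdd2 a

lemma aux_biSup_const {s : Set ℝ} (hs : s.Nonempty) {F : ℝ → ℝ} {c : ℝ} (hc : 0 ≤ c)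
    (hF : ∀ z ∈ s, F z = c) : (⨆ z ∈ s, F z) = c := by
  obtain ⟨a, ha⟩ := hs
  refine le_antisymm (aux_biSup_le hc (fun z hz => (hF z hz).le)) ?_
  have hbdd : BddAbove (F '' s) := by
    refine ⟨c, ?_⟩
    rintro _ ⟨z, hz, rfl⟩
    exact (hF z hz).le
  calc c = F a := (hF a ha).symm
    _ ≤ ⨆ z ∈ s, F z := aux_le_biSup hbdd ha

lemma aux_round_sub {r : ℤ} {ε : ℝ} (h0 : 0 < ε) (h1 : ε < 1/2) :
    round ((r : ℝ) - ε) = r := by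
  rw [round_eq, show (r : ℝ) - ε + 1/2 = (r : ℝ) + (1/2 - ε) by ring, Int.floor_intCast_add,
    Int.floor_eq_zero_iff.2 ⟨by linarith, by linarith⟩, add_zero]

lemma aux_round_add {r : ℤ} {ε : ℝ} (h0 : 0 < ε) (h1 : ε < 1/2) :
    round ((r : ℝ) + ε) = r := by
  rw [round_eq, show (r : ℝ) + ε + 1/2 = (r : ℝ) + (ε + 1/2) by ring, Int.floor_intCast_add,
    Int.floor_eq_zero_iff.2 ⟨by linarith, by linarith⟩, add_zero]

lemma aux_measurable_roundcast : Measurable (fun x : ℝ => ((round x : ℤ) : ℝ)) := by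
  have h : Measurable (round : ℝ → ℤ) := by
    have : (round : ℝ → ℤ) = fun x => ⌊x + 1/2⌋ := funext round_eq
    rw [this]
    exact Int.measurable_floor.comp (measurable_id.add_const _)
  exact measurable_from_top.comp h


/-- The staircase predictor `fstar x = m * round x` achieves standard and robust population
squared loss `σ²`, and `σ²` is the minimum value of both objectives over all measurable
predictors. -/
theorem stmt_11 {Ω : Type*} [MeasurableSpace Ω] (μ : Measure Ω) [IsProbabilityMeasure μ]
    (X V : Ω → ℝ) (hX : Measurable X) (hV : Measurable V)
    (hVdist : Measure.map V μ = gaussianReal 0 1)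
    (hindep : IndepFun X V μ)
    (m σ ε : ℝ) (hε : ε ∈ Set.Ioo 0 (1 / 2 : ℝ))
    (hsupp : ∀ᵐ ω ∂μ, ∃ k : ℤ, X ω = k ∨ X ω = k - ε ∨ X ω = k + ε)
    (Y : Ω → ℝ) (hY : ∀ ω, Y ω = m * (round (X ω) : ℝ) + σ * V ω)
    (B : ℝ → Set ℝ)
    (hB : ∀ x, B x = {((round x : ℤ) : ℝ) - ε, ((round x : ℤ) : ℝ), ((round x : ℤ) : ℝ) + ε})
    (fstar : ℝ → ℝ) (hfstar : ∀ x, fstar x = m * (round x : ℝ)) :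
    (∫ ω, (fstar (X ω) - Y ω) ^ 2 ∂μ = σ ^ 2) ∧
    (∫ ω, ⨆ z ∈ B (X ω), (fstar z - Y ω) ^ 2 ∂μ = σ ^ 2) ∧
    (∀ f : ℝ → ℝ, Measurable f →
      Integrable (fun ω => (f (X ω) - Y ω) ^ 2) μ →
      σ ^ 2 ≤ ∫ ω, (f (X ω) - Y ω) ^ 2 ∂μ) ∧
    (∀ f : ℝ → ℝ, Measurable f →
      Integrable (fun ω => ⨆ z ∈ B (X ω), (f z - Y ω) ^ 2) μ →
      (∀ (x : ℝ) (y : ℝ), BddAbove ((fun z => (f z - y) ^ 2) '' B x)) →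
      σ ^ 2 ≤ ∫ ω, ⨆ z ∈ B (X ω), (f z - Y ω) ^ 2 ∂μ) := by
  obtain ⟨hε0, hε1⟩ := hε
  have hVae : AEMeasurable V μ := hV.aemeasurable
  have hid_sm : AEStronglyMeasurable (fun x : ℝ => x) (Measure.map V μ) := by
    rw [hVdist]; exact aestronglyMeasurable_id
  have hsq_sm : AEStronglyMeasurable (fun x : ℝ => x ^ 2) (Measure.map V μ) := by
    rw [hVdist]; exact (measurable_id.pow_const 2).aestronglyMeasurable
  have hVint : Integrable V μ := by
    have h := aux_gauss_id.1
    rw [← hVdist] at h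
    simpa [Function.comp_def] using (integrable_map_measure hid_sm hVae).1 h
  have hVmean : ∫ ω, V ω ∂μ = 0 := by
    calc ∫ ω, V ω ∂μ = ∫ x, x ∂(Measure.map V μ) := (integral_map hVae hid_sm).symm
      _ = 0 := by rw [hVdist]; exact aux_gauss_id.2
  have hVsq_int : Integrable (fun ω => V ω ^ 2) μ := by
    have h := aux_gauss_sq.1
    rw [← hVdist] at h
    simpa [Function.comp_def] using (integrable_map_measure hsq_sm hVae).1 h
  have hVsq : ∫ ω, V ω ^ 2 ∂μ = 1 := by
    calc ∫ ω, V ω ^ 2 ∂μ = ∫ x, x ^ 2 ∂(Measure.map V μ) := (integral_map hVae hsq_sm).symm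
      _ = 1 := by rw [hVdist]; exact aux_gauss_sq.2
  have mround := aux_measurable_roundcast
  have hYmeas : Measurable Y := by
    have h : Y = fun ω => m * ((round (X ω) : ℤ) : ℝ) + σ * V ω := funext hY
    rw [h]
    exact (measurable_const.mul (mround.comp hX)).add (measurable_const.mul hV)
  -- key lower bound for arbitrary measurable predictors
  have key : ∀ h : ℝ → ℝ, Measurable h →
      Integrable (fun ω => (h (X ω) - Y ω) ^ 2) μ →
      σ ^ 2 ≤ ∫ ω, (h (X ω) - Y ω) ^ 2 ∂μ := by
    intro h hh hint
    set g : ℝ → ℝ := fun x => h x - m * ((round x : ℤ) : ℝ) with hg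
    have hgmeas : Measurable g := hh.sub (measurable_const.mul mround)
    set W : Ω → ℝ := fun ω => g (X ω) with hWdef
    have hWmeas : Measurable W := hgmeas.comp hX
    have heq : (fun ω => (h (X ω) - Y ω) ^ 2) = fun ω => (W ω - σ * V ω) ^ 2 := by
      funext ω; rw [hY ω]; simp only [hWdef, hg]; ring
    rw [heq] at hint ⊢
    have hσV : Integrable (fun ω => (σ * V ω) ^ 2) μ := by
      refine (hVsq_int.const_mul (σ ^ 2)).congr ?_
      filter_upwards with ω; ring
    have hWsq : Integrable (fun ω => W ω ^ 2) μ := by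
      refine Integrable.mono' ((hint.const_mul 2).add (hσV.const_mul 2))
        ((hWmeas.pow_const 2).aestronglyMeasurable) ?_
      filter_upwards with ω
      simp only [Pi.add_apply]
      rw [Real.norm_eq_abs, abs_of_nonneg (sq_nonneg _)]
      nlinarith [sq_nonneg (W ω - 2 * (σ * V ω))]
    have hW1 : Integrable W μ := by
      refine Integrable.mono' (hWsq.add (integrable_const 1))
        hWmeas.aestronglyMeasurable ?_
      filter_upwards with ω
      simp only [Pi.add_apply]
      rw [Real.norm_eq_abs]
      nlinarith [sq_nonneg (|W ω| - 1), sq_abs (W ω), abs_nonneg (W ω)]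
    have hiWV : IndepFun W V μ := hindep.comp hgmeas measurable_id
    have hWV : Integrable (fun ω => W ω * V ω) μ := hiWV.integrable_mul hW1 hVint
    have hintWV : ∫ ω, W ω * V ω ∂μ = 0 := by
      calc ∫ ω, W ω * V ω ∂μ = ∫ ω, (W * V) ω ∂μ := rfl
        _ = (∫ ω, W ω ∂μ) * ∫ ω, V ω ∂μ := hiWV.integral_mul_eq_mul_integral hW1.aestronglyMeasurable hVint.aestronglyMeasurable
        _ = 0 := by rw [hVmean, mul_zero]
    have hexp : (fun ω => (W ω - σ * V ω) ^ 2)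
        = fun ω => (W ω ^ 2 - (2 * σ) * (W ω * V ω)) + σ ^ 2 * V ω ^ 2 := by
      funext ω; ring
    rw [hexp]
    have hB' : Integrable (fun ω => 2 * σ * (W ω * V ω)) μ := hWV.const_mul (2*σ)
    have hA : Integrable (fun ω => W ω ^ 2 - 2 * σ * (W ω * V ω)) μ := hWsq.sub hB'
    rw [integral_add hA (hVsq_int.const_mul (σ^2)), integral_sub hWsq hB',
      integral_const_mul, integral_const_mul, hintWV, hVsq]
    have h0 : 0 ≤ ∫ ω, W ω ^ 2 ∂μ := integral_nonneg fun ω => sq_nonneg _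
    linarith
  -- part 1
  have h1eq : (fun ω => (fstar (X ω) - Y ω) ^ 2) = fun ω => σ ^ 2 * V ω ^ 2 := by
    funext ω; rw [hfstar, hY]; ring
  have hpart1 : ∫ ω, (fstar (X ω) - Y ω) ^ 2 ∂μ = σ ^ 2 := by
    rw [h1eq, integral_const_mul, hVsq, mul_one]
  -- part 2
  have h2eq : (fun ω => ⨆ z ∈ B (X ω), (fstar z - Y ω) ^ 2) = fun ω => σ ^ 2 * V ω ^ 2 := by
    funext ω
    set r : ℤ := round (X ω) with hr
    have hBω : B (X ω) = {(r:ℝ) - ε, (r:ℝ), (r:ℝ) + ε} := hB (X ω)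
    have hval : ∀ z ∈ B (X ω), (fstar z - Y ω) ^ 2 = σ ^ 2 * V ω ^ 2 := by
      intro z hz
      rw [hBω] at hz
      simp only [Set.mem_insert_iff, Set.mem_singleton_iff] at hz
      have hfz : fstar z = m * (r : ℝ) := by
        rcases hz with rfl | rfl | rfl
        · rw [hfstar, aux_round_sub hε0 hε1]
        · rw [hfstar, round_intCast]
        · rw [hfstar, aux_round_add hε0 hε1]
      rw [hfz, hY, hr]; ring
    have hne : (B (X ω)).Nonempty := by
      refine ⟨(r:ℝ), ?_⟩
      rw [hBω]; exact Set.mem_insert_of_mem _ (Set.mem_insert _ _)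
    exact aux_biSup_const hne (by positivity) hval
  have hpart2 : ∫ ω, ⨆ z ∈ B (X ω), (fstar z - Y ω) ^ 2 ∂μ = σ ^ 2 := by
    rw [h2eq, integral_const_mul, hVsq, mul_one]
  refine ⟨hpart1, hpart2, fun f hf hint => key f hf hint, ?_⟩
  -- part 4
  intro f hf hint hbdd
  set h : ℝ → ℝ := fun x => f ((round x : ℤ) : ℝ) with hhdef
  have hhm : Measurable h := hf.comp mround
  have hle : ∀ ω, (h (X ω) - Y ω) ^ 2 ≤ ⨆ z ∈ B (X ω), (f z - Y ω) ^ 2 := by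
    intro ω
    have hmem : ((round (X ω) : ℤ) : ℝ) ∈ B (X ω) := by
      rw [hB]; exact Set.mem_insert_of_mem _ (Set.mem_insert _ _)
    exact aux_le_biSup (hbdd (X ω) (Y ω)) hmem
  have hlhs_int : Integrable (fun ω => (h (X ω) - Y ω) ^ 2) μ := by
    refine Integrable.mono' hint
      (((hhm.comp hX).sub hYmeas).pow_const 2).aestronglyMeasurable ?_
    filter_upwards with ω
    rw [Real.norm_eq_abs, abs_of_nonneg (sq_nonneg _)]
    exact hle ω
  calc σ ^ 2 ≤ ∫ ω, (h (X ω) - Y ω) ^ 2 ∂μ := key h hhm hlhs_int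
    _ ≤ ∫ ω, ⨆ z ∈ B (X ω), (f z - Y ω) ^ 2 ∂μ := integral_mono hlhs_int hint hle
end
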